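/- Let a_1, …, a_T be nonnegative real numbers. Then ∑_{t=1}^T a_t / √(∑_{τ=1}^t a_τ) ≤ 2 √(∑_{t=1}^T a_t), where any summand whose denominator is zero is interpreted as 0. -/

import Mathlib

open Finset

lemma key_step (s' c : ℝ) (hs' : 0 ≤ s') (hc : 0 ≤ c) :
    c / Real.sqrt (s' + c) + 2 * Real.sqrt s' ≤ 2 * Real.sqrt (s' + c) := by
  set s := s' + c with hs
  have hsnn : 0 ≤ s := by positivity
  rcases eq_or_lt_of_le hsnn with h | h
  · have hc0 : c = 0 := by nlinarith
    have hs'0 : s' = 0 := by nlinarith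
    simp [hc0, hs'0, ← h]
  · have hrs : 0 < Real.sqrt s := Real.sqrt_pos.mpr h
    rw [div_add' _ _ _ (ne_of_gt hrs), div_le_iff₀ hrs]
    have h1 : Real.sqrt s' * Real.sqrt s' = s' := Real.mul_self_sqrt hs'
    have h2 : Real.sqrt s * Real.sqrt s = s := Real.mul_self_sqrt hsnn
    nlinarith [sq_nonneg (Real.sqrt s - Real.sqrt s'), Real.sqrt_nonneg s']

/-- telescoping inequality for adaptively normalized sums.
(In Lean, division by zero yields `0`, matching the stated convention for
summands with vanishing denominator.) -/
theorem stmt3 (T : ℕ) (a : ℕ → ℝ) (ha : ∀ t, 0 ≤ a t) :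
    (∑ t ∈ Icc 1 T, a t / Real.sqrt (∑ τ ∈ Icc 1 t, a τ)) ≤
      2 * Real.sqrt (∑ t ∈ Icc 1 T, a t) := by
  induction T with
  | zero => simp
  | succ T ih =>
    rw [Finset.sum_Icc_succ_top (Nat.le_add_left 1 T),
        Finset.sum_Icc_succ_top (Nat.le_add_left 1 T) a]
    have h := key_step (∑ τ ∈ Icc 1 T, a τ) (a (T + 1))
      (Finset.sum_nonneg fun i _ => ha i) (ha (T + 1))
    linarith
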